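/- For odd positive integer s, the operators A₁f(x) = f′(x), A₂f(x) = f^(s)(−x) + x·f(−x), A₃f(x) = f(−x) on the space of (s+1)-times differentiable functions satisfy A₁A₂ + A₂A₁ = A₃, A₁A₃ + A₃A₁ = 0, and A₂A₃ + A₃A₂ = 0. If instead s = 2r is even, then A₂A₃ + A₃A₂ = 2A₁^{2r}. -/

import Mathlib

noncomputable def A2op (s : ℕ) (f : ℝ → ℂ) : ℝ → ℂ :=
  fun x => iteratedDeriv s f (-x) + x * f (-x)

noncomputable def A3op (f : ℝ → ℂ) : ℝ → ℂ := fun x => f (-x)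

/-- For odd positive `s`, the operators `A₁f = f'`, `A₂f(x) = f⁽ˢ⁾(-x) + x f(-x)`,
`A₃f(x) = f(-x)` on `(s+1)`-times continuously differentiable functions satisfy the
color Heisenberg relations; for even `s = 2r` the third relation becomes
`A₂A₃ + A₃A₂ = 2A₁^{2r}`. -/
theorem color_heisenberg_higher_derivative_rep (s : ℕ) (hs : 0 < s)
    (f : ℝ → ℂ) (hf : ContDiff ℝ ((s : ℕ∞) + 1) f) :
    (Odd s → ∀ x : ℝ,
      deriv (A2op s f) x + A2op s (deriv f) x = A3op f x ∧
      deriv (A3op f) x + A3op (deriv f) x = 0 ∧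
      A2op s (A3op f) x + A3op (A2op s f) x = 0) ∧
    (∀ r : ℕ, s = 2 * r → ∀ x : ℝ,
      A2op s (A3op f) x + A3op (A2op s f) x = 2 * iteratedDeriv (2 * r) f x) := by
  have hg : Differentiable ℝ (iteratedDeriv s f) :=
    hf.differentiable_iteratedDeriv s (by exact_mod_cast Nat.lt_succ_self s)
  have hf' : Differentiable ℝ f := by
    have : (1 : WithTop ℕ∞) ≤ ((s : ℕ∞) + 1 : ℕ∞) := by
      exact_mod_cast Nat.one_le_iff_ne_zero.mpr (Nat.succ_ne_zero s)
    exact hf.differentiable (by simp)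
  constructor
  · intro hodd x
    refine ⟨?_, ?_, ?_⟩
    · -- first relation
      have H1 : HasDerivAt (fun y : ℝ => iteratedDeriv s f (-y))
          (-(iteratedDeriv (s + 1) f (-x))) x := by
        have hneg : HasDerivAt (fun y : ℝ => -y) (-1 : ℝ) x := by
          simpa [Pi.neg_def] using (hasDerivAt_id' x).neg
        have h := HasDerivAt.scomp x ((hg (-x)).hasDerivAt) hneg
        simpa [Function.comp_def, iteratedDeriv_succ, mul_comm] using h
      have H2 : HasDerivAt (fun y : ℝ => (y : ℂ) * f (-y))
          (f (-x) + (x : ℂ) * (-(deriv f (-x)))) x := by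
        have hc : HasDerivAt (fun y : ℝ => (y : ℂ)) 1 x := by
          simpa using (hasDerivAt_id' x).ofReal_comp
        have hd : HasDerivAt (fun y : ℝ => f (-y)) (-(deriv f (-x))) x := by
          have hneg : HasDerivAt (fun y : ℝ => -y) (-1 : ℝ) x := by
            simpa [Pi.neg_def] using (hasDerivAt_id' x).neg
          have h := HasDerivAt.scomp x ((hf' (-x)).hasDerivAt) hneg
          simpa [Function.comp_def, mul_comm] using h
        simpa [Pi.mul_def] using hc.mul hd
      have hA2 : deriv (A2op s f) x
          = -(iteratedDeriv (s + 1) f (-x)) + (f (-x) + (x : ℂ) * (-(deriv f (-x)))) := by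
        have := (H1.add H2).deriv
        show deriv (fun y : ℝ => iteratedDeriv s f (-y) + (y : ℂ) * f (-y)) x = _
        simpa [Pi.add_def] using this
      have hA2' : A2op s (deriv f) x = iteratedDeriv (s + 1) f (-x) + x * deriv f (-x) := by
        simp [A2op, iteratedDeriv_succ']
      rw [hA2, hA2']
      simp [A3op]; ring
    · -- second relation
      have : deriv (A3op f) x = -deriv f (-x) := deriv_comp_neg (f := f) (x := x)
      rw [this]
      simp [A3op]
    · -- third relation, odd case
      have hA3 : A3op f = fun y => f (-y) := rfl
      have hcn := iteratedDeriv_comp_neg (𝕜 := ℝ) s f (-x)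
      simp only [A2op, A3op, neg_neg] at *
      rw [hA3, hcn, hodd.neg_one_pow]
      simp
      ring
  · intro r hr x
    subst hr
    have hA3 : A3op f = fun y => f (-y) := rfl
    have hcn := iteratedDeriv_comp_neg (𝕜 := ℝ) (2 * r) f (-x)
    simp only [A2op, A3op, neg_neg] at *
    rw [hA3, hcn]
    simp [pow_mul]
    ring
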